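/- Let f ≥ 0 be a real number and A ∈ 𝐒. Then H(A,f) = 0 holds if and only if M(A,f) = 0 and A ∈ 𝐒₊. -/

import Mathlib

open Matrix Set

/-- The set 𝐒₁ of positive semidefinite symmetric d×d real matrices with unit trace. -/
def S1set (d : ℕ) : Set (Matrix (Fin d) (Fin d) ℝ) :=
  {B | B.PosSemidef ∧ B.trace = 1}

/-- The value −B:A + f·(det B)^(1/d) appearing under the supremum of the Bellman operator. -/
noncomputable def bval (d : ℕ) (A B : Matrix (Fin d) (Fin d) ℝ) (f : ℝ) : ℝ :=
  -((B * A).trace) + f * B.det ^ ((1 : ℝ) / d)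

/-- The Bellman operator H(A,f) = sup_{B ∈ 𝐒₁} (−B:A + f·(det B)^(1/d)). -/
noncomputable def bellman (d : ℕ) (A : Matrix (Fin d) (Fin d) ℝ) (f : ℝ) : ℝ :=
  sSup ((fun B => bval d A B f) '' S1set d)

/-- The Monge–Ampère operator M(A,f) = (f/d)^d − det A. -/
noncomputable def MAop (d : ℕ) (A : Matrix (Fin d) (Fin d) ℝ) (f : ℝ) : ℝ :=
  (f / d) ^ d - A.det

/-- The Hessian matrix D²φ(x) of φ : ℝ^d → ℝ at x. -/
noncomputable def hessianM (d : ℕ) (φ : (Fin d → ℝ) → ℝ) (x : Fin d → ℝ) :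
    Matrix (Fin d) (Fin d) ℝ :=
  fun i j => iteratedFDeriv ℝ 2 φ x ![Pi.single i 1, Pi.single j 1]

/-! ### Auxiliary lemmas -/

section Aux

private lemma trace_eq_sum_eig {n : Type*} [Fintype n] [DecidableEq n]
    {A : Matrix n n ℝ} (hA : A.IsHermitian) :
    A.trace = ∑ i, hA.eigenvalues i := by
  nth_rewrite 1 [hA.spectral_theorem, Unitary.conjStarAlgAut_apply]
  rw [Matrix.trace_mul_cycle]
  rw [show (star (hA.eigenvectorUnitary : Matrix n n ℝ)) *
      (hA.eigenvectorUnitary : Matrix n n ℝ) = 1 from Unitary.coe_star_mul_self _]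
  simp [Matrix.trace_diagonal]

private lemma psd_det_nonneg {n : Type*} [Fintype n] [DecidableEq n]
    {B : Matrix n n ℝ} (hB : B.PosSemidef) : 0 ≤ B.det := by
  rw [hB.isHermitian.det_eq_prod_eigenvalues]
  exact Finset.prod_nonneg fun i _ => by simpa using hB.eigenvalues_nonneg i

private lemma amgm_one {d : ℕ} (hd : 0 < d) {B : Matrix (Fin d) (Fin d) ℝ}
    (hB : B.PosSemidef) : (d:ℝ) * B.det ^ ((1:ℝ)/d) ≤ B.trace := by
  have hH := hB.isHermitian
  have he : ∀ i, 0 ≤ hH.eigenvalues i := hB.eigenvalues_nonneg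
  have hdR : (0:ℝ) < d := by exact_mod_cast hd
  have hdet : B.det = ∏ i, hH.eigenvalues i := by
    simpa using hH.det_eq_prod_eigenvalues
  have htr : B.trace = ∑ i, hH.eigenvalues i := trace_eq_sum_eig hH
  rw [hdet, htr]
  have hw : ∑ _i : Fin d, (1:ℝ)/d = 1 := by
    simp only [Finset.sum_const, Finset.card_univ, Fintype.card_fin, nsmul_eq_mul]
    field_simp
  have key := Real.geom_mean_le_arith_mean_weighted Finset.univ (fun _ => (1:ℝ)/d)
      hH.eigenvalues (fun i _ => by positivity) hw (fun i _ => he i)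
  have hprod : (∏ i, hH.eigenvalues i) ^ ((1:ℝ)/d) = ∏ i, hH.eigenvalues i ^ ((1:ℝ)/d) := by
    rw [← Real.finset_prod_rpow Finset.univ _ (fun i _ => he i)]
  rw [hprod]
  have h2 : (∏ i, hH.eigenvalues i ^ ((1:ℝ)/d)) ≤ (1/d) * ∑ i, hH.eigenvalues i := by
    simpa [Finset.mul_sum] using key
  calc (d:ℝ) * ∏ i, hH.eigenvalues i ^ ((1:ℝ)/d)
      ≤ (d:ℝ) * ((1/d) * ∑ i, hH.eigenvalues i) := mul_le_mul_of_nonneg_left h2 hdR.le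
    _ = ∑ i, hH.eigenvalues i := by field_simp

open scoped MatrixOrder in
private lemma amgm_two {d : ℕ} (hd : 0 < d) {A B : Matrix (Fin d) (Fin d) ℝ}
    (hA : A.PosSemidef) (hB : B.PosSemidef) :
    (d:ℝ) * (A.det * B.det) ^ ((1:ℝ)/d) ≤ (B * A).trace := by
  set S := CFC.sqrt A with hSdef
  have hS : S.PosSemidef := Matrix.nonneg_iff_posSemidef.mp (CFC.sqrt_nonneg A)
  have hSH : Sᴴ = S := hS.isHermitian
  have hSS : S * S = A := CFC.sqrt_mul_sqrt_self A hA.nonneg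
  have hC : (S * B * S).PosSemidef := by
    have := hB.mul_mul_conjTranspose_same S
    rwa [hSH] at this
  have htr : (S * B * S).trace = (B * A).trace := by
    rw [Matrix.trace_mul_cycle, hSS, Matrix.trace_mul_comm]
  have hdet : (S * B * S).det = A.det * B.det := by
    rw [Matrix.det_mul, Matrix.det_mul, ← hSS, Matrix.det_mul]; ring
  have := amgm_one hd hC
  rwa [htr, hdet] at this

private lemma trace_mul_psd_nonneg {d : ℕ} (hd : 0 < d) {A B : Matrix (Fin d) (Fin d) ℝ}
    (hA : A.PosSemidef) (hB : B.PosSemidef) : 0 ≤ (B * A).trace := by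
  refine le_trans ?_ (amgm_two hd hA hB)
  have h1 : 0 ≤ A.det := psd_det_nonneg hA
  have h2 : 0 ≤ B.det := psd_det_nonneg hB
  positivity

private lemma psd_diag_nonneg {d : ℕ} {B : Matrix (Fin d) (Fin d) ℝ} (hB : B.PosSemidef)
    (i : Fin d) : 0 ≤ B i i := by
  have := hB.dotProduct_mulVec_nonneg (Pi.single i 1)
  simpa [single_dotProduct, Matrix.mulVec_single] using this

private lemma psd_entry_le {d : ℕ} {B : Matrix (Fin d) (Fin d) ℝ} (hB : B.PosSemidef)
    (htr : B.trace = 1) (i j : Fin d) : |B i j| ≤ 1 := by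
  have hdiag : ∀ k, 0 ≤ B k k := psd_diag_nonneg hB
  have hles : ∀ k, B k k ≤ 1 := by
    intro k
    have : B k k ≤ B.trace :=
      Finset.single_le_sum (f := fun k => B k k) (fun k _ => hdiag k) (Finset.mem_univ k)
    rwa [htr] at this
  by_cases hij : i = j
  · subst hij; rw [abs_of_nonneg (hdiag i)]; exact hles i
  · have hsym : B j i = B i j := by
      conv_lhs => rw [← hB.isHermitian.eq]
      simp [Matrix.conjTranspose_apply]
    have h1 := hB.dotProduct_mulVec_nonneg (Pi.single i 1 + Pi.single j 1)
    have h2 := hB.dotProduct_mulVec_nonneg (Pi.single i 1 - Pi.single j 1)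
    simp only [star_trivial, Matrix.mulVec_add, Matrix.mulVec_sub, add_dotProduct,
      sub_dotProduct, dotProduct_add, dotProduct_sub,
      Matrix.mulVec_single, single_dotProduct] at h1 h2
    simp only [mul_one, one_mul, MulOpposite.op_one, one_smul, Matrix.col_apply] at h1 h2
    rw [abs_le]
    constructor <;> [nlinarith [hles i, hles j, h2]; nlinarith [hles i, hles j, h1]]

private lemma vecMulVec_posSemidef {d : ℕ} (v : Fin d → ℝ) :
    (Matrix.vecMulVec v v).PosSemidef := by
  rw [Matrix.vecMulVec_eq Unit]
  have h := Matrix.posSemidef_self_mul_conjTranspose (Matrix.replicateCol Unit v)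
  have : (Matrix.replicateCol Unit v)ᴴ = Matrix.replicateRow Unit v := by
    rw [Matrix.conjTranspose_replicateCol]; simp
  rwa [this] at h

private lemma trace_vecMulVec_mul {d : ℕ} (v w : Fin d → ℝ) (A : Matrix (Fin d) (Fin d) ℝ) :
    (Matrix.vecMulVec v w * A).trace = w ⬝ᵥ (A *ᵥ v) := by
  simp only [Matrix.trace, Matrix.diag, Matrix.mul_apply, Matrix.vecMulVec_apply,
    dotProduct, Matrix.mulVec]
  rw [Finset.sum_comm]
  exact Finset.sum_congr rfl fun j _ => by
    rw [Finset.mul_sum]; exact Finset.sum_congr rfl fun i _ => by ring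

private lemma trace_vecMulVec {d : ℕ} (v : Fin d → ℝ) :
    (Matrix.vecMulVec v v).trace = ∑ i, v i ^ 2 := by
  simp [Matrix.trace, Matrix.diag, Matrix.vecMulVec_apply, sq]

private lemma det_vecMulVec_self {d : ℕ} (hd : 2 ≤ d) (v : Fin d → ℝ) :
    (Matrix.vecMulVec v v).det = 0 := by
  rw [← Matrix.exists_mulVec_eq_zero_iff]
  have hmv : ∀ w : Fin d → ℝ, v ⬝ᵥ w = 0 → Matrix.vecMulVec v v *ᵥ w = 0 := by
    intro w hw
    funext l
    have : (Matrix.vecMulVec v v *ᵥ w) l = v l * (v ⬝ᵥ w) := by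
      simp [Matrix.mulVec, dotProduct, Matrix.vecMulVec_apply, Finset.mul_sum, mul_assoc]
    simp [this, hw]
  have hnt : Nontrivial (Fin d) := Fin.nontrivial_iff_two_le.mpr hd
  by_cases hv : v = 0
  · refine ⟨(Pi.single ⟨0, by omega⟩ 1 : Fin d → ℝ), ?_, hmv _ ?_⟩
    · intro h
      have h0 := congrFun h ⟨0, by omega⟩
      rw [Pi.single_eq_same] at h0
      exact one_ne_zero h0
    · simp [hv]
  · obtain ⟨i, hi⟩ := Function.ne_iff.mp hv
    obtain ⟨k, hk⟩ := exists_ne i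
    refine ⟨v k • (Pi.single i 1 : Fin d → ℝ) - v i • (Pi.single k 1 : Fin d → ℝ), ?_, hmv _ ?_⟩
    · intro h
      have := congrFun h k
      simp [Pi.single_apply, hk, hk.symm] at this
      exact hi this
    · simp [dotProduct_sub, dotProduct_smul, dotProduct_single]
      ring

private lemma pd_of_psd_det_ne {d : ℕ} {A : Matrix (Fin d) (Fin d) ℝ} (hA : A.PosSemidef)
    (hdet : A.det ≠ 0) : A.PosDef := by
  refine Matrix.PosDef.of_dotProduct_mulVec_pos hA.isHermitian (fun x hx => ?_)
  rcases lt_or_eq_of_le (hA.dotProduct_mulVec_nonneg x) with h | h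
  · exact h
  · exfalso
    have h0 : A *ᵥ x = 0 := (hA.dotProduct_mulVec_zero_iff x).mp h.symm
    exact hdet (Matrix.exists_mulVec_eq_zero_iff.mp ⟨x, hx, h0⟩)

private lemma pd_trace_pos {d : ℕ} (hd : 0 < d) {A : Matrix (Fin d) (Fin d) ℝ}
    (hA : A.PosDef) : 0 < A.trace := by
  have h : ∀ i, 0 < A i i := by
    intro i
    have := hA.dotProduct_mulVec_pos (x := Pi.single i 1) (by
      intro h
      have h0 := congrFun h i
      rw [Pi.single_eq_same] at h0
      exact one_ne_zero h0)
    simpa [single_dotProduct, Matrix.mulVec_single] using this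
  exact Finset.sum_pos (fun i _ => h i) ⟨⟨0, hd⟩, Finset.mem_univ _⟩

private lemma sub_smul_one_posSemidef {d : ℕ} (hd : 0 < d) {A : Matrix (Fin d) (Fin d) ℝ}
    (hA : A.PosDef) :
    ∃ m : ℝ, 0 < m ∧ (A - m • (1 : Matrix (Fin d) (Fin d) ℝ)).PosSemidef := by
  have hH := hA.isHermitian
  have hne : (Finset.univ : Finset (Fin d)).Nonempty := ⟨⟨0, hd⟩, Finset.mem_univ _⟩
  set m := Finset.univ.inf' hne hH.eigenvalues with hm
  have hmpos : 0 < m := by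
    obtain ⟨i, _, hi⟩ := Finset.exists_mem_eq_inf' hne hH.eigenvalues
    rw [hm, hi]
    exact hA.eigenvalues_pos i
  refine ⟨m, hmpos, ?_⟩
  set U : Matrix (Fin d) (Fin d) ℝ := (hH.eigenvectorUnitary : Matrix (Fin d) (Fin d) ℝ) with hU
  have hu : U * star U = 1 := Unitary.coe_mul_star_self _
  have h1 : A - m • (1 : Matrix (Fin d) (Fin d) ℝ)
      = U * Matrix.diagonal (fun i => hH.eigenvalues i - m) * star U := by
    have hsp : A = U * Matrix.diagonal (RCLike.ofReal ∘ hH.eigenvalues) * star U :=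
      hH.spectral_theorem
    have hdiag : Matrix.diagonal (fun i => hH.eigenvalues i - m)
        = Matrix.diagonal (RCLike.ofReal ∘ hH.eigenvalues)
          - m • (1 : Matrix (Fin d) (Fin d) ℝ) := by
      rw [Matrix.smul_one_eq_diagonal, ← Matrix.diagonal_sub]
      congr 1
    rw [hdiag, Matrix.mul_sub, Matrix.sub_mul, ← hsp]
    congr 1
    rw [Matrix.mul_smul, Matrix.smul_mul, Matrix.mul_one, hu]
  rw [h1, Matrix.star_eq_conjTranspose U]
  exact (Matrix.PosSemidef.diagonal fun i =>
    sub_nonneg.2 (Finset.inf'_le _ (Finset.mem_univ i))).mul_mul_conjTranspose_same U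

private lemma exists_lower {d : ℕ} (hd : 0 < d) {A : Matrix (Fin d) (Fin d) ℝ}
    (hA : A.PosDef) :
    ∃ m : ℝ, 0 < m ∧ ∀ B : Matrix (Fin d) (Fin d) ℝ, B.PosSemidef → B.trace = 1 →
      m ≤ (B * A).trace := by
  obtain ⟨m, hm, hpsd⟩ := sub_smul_one_posSemidef hd hA
  refine ⟨m, hm, fun B hB htr => ?_⟩
  have h0 : 0 ≤ (B * (A - m • (1 : Matrix (Fin d) (Fin d) ℝ))).trace :=
    trace_mul_psd_nonneg hd hpsd hB
  have heq : (B * (A - m • (1 : Matrix (Fin d) (Fin d) ℝ))).trace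
      = (B * A).trace - m * B.trace := by
    rw [Matrix.mul_sub, Matrix.trace_sub, Matrix.mul_smul, Matrix.mul_one, Matrix.trace_smul]
    simp [smul_eq_mul]
  rw [heq, htr] at h0
  linarith

private lemma bval_le {d : ℕ} (hd : 0 < d) {A B : Matrix (Fin d) (Fin d) ℝ} {f : ℝ}
    (hf : 0 ≤ f) (hB : B.PosSemidef) (htr : B.trace = 1) :
    bval d A B f ≤ (∑ i, ∑ j, |A j i|) + f * (1/d) := by
  have hdR : (0:ℝ) < d := by exact_mod_cast hd
  have htrf : (B * A).trace = ∑ i, ∑ j, B i j * A j i := by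
    simp [Matrix.trace, Matrix.diag, Matrix.mul_apply]
  have h1 : -((B * A).trace) ≤ ∑ i, ∑ j, |A j i| := by
    rw [htrf]
    refine le_trans (neg_le_abs _) (le_trans (Finset.abs_sum_le_sum_abs _ _) ?_)
    refine Finset.sum_le_sum fun i _ => le_trans (Finset.abs_sum_le_sum_abs _ _) ?_
    refine Finset.sum_le_sum fun j _ => ?_
    rw [abs_mul]
    calc |B i j| * |A j i| ≤ 1 * |A j i| :=
          mul_le_mul_of_nonneg_right (psd_entry_le hB htr i j) (abs_nonneg _)
      _ = |A j i| := one_mul _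
  have hdet0 : 0 ≤ B.det := psd_det_nonneg hB
  have ht : B.det ^ ((1:ℝ)/d) ≤ 1/d := by
    have h := amgm_one hd hB
    rw [htr] at h
    rw [le_div_iff₀ hdR]
    linarith
  have h2 : f * (B.det ^ ((1:ℝ)/d)) ≤ f * (1/d) := mul_le_mul_of_nonneg_left ht hf
  unfold bval
  linarith

private lemma psd_smul {d : ℕ} {B : Matrix (Fin d) (Fin d) ℝ} (hB : B.PosSemidef) {c : ℝ}
    (hc : 0 ≤ c) : (c • B).PosSemidef := by
  refine Matrix.PosSemidef.of_dotProduct_mulVec_nonneg ?_ (fun x => ?_)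
  · unfold Matrix.IsHermitian
    rw [Matrix.conjTranspose_smul, hB.isHermitian.eq]
    simp
  · rw [Matrix.smul_mulVec, dotProduct_smul]
    exact smul_nonneg hc (hB.dotProduct_mulVec_nonneg x)

private lemma mem_S1_inv_smul {d : ℕ} (hd : 0 < d) {A : Matrix (Fin d) (Fin d) ℝ}
    (hA : A.PosDef) : ((A⁻¹.trace)⁻¹ • A⁻¹) ∈ S1set d := by
  have hinv : A⁻¹.PosDef := hA.inv
  have htr : 0 < A⁻¹.trace := pd_trace_pos hd hinv
  constructor
  · exact psd_smul hinv.posSemidef (inv_nonneg.mpr htr.le)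
  · simp only [Matrix.trace_smul, smul_eq_mul]
    exact inv_mul_cancel₀ htr.ne'

private lemma exists_unit_scale {d : ℕ} {x : Fin d → ℝ} (hx0 : x ≠ 0) :
    ∃ c : ℝ, 0 < c ∧ ∑ i, (c • x) i ^ 2 = 1 := by
  have hsum : 0 < ∑ i, x i ^ 2 := by
    obtain ⟨i, hi⟩ := Function.ne_iff.mp hx0
    exact Finset.sum_pos' (fun j _ => sq_nonneg _)
      ⟨i, Finset.mem_univ _, lt_of_le_of_ne (sq_nonneg _) (Ne.symm (pow_ne_zero 2 hi))⟩
  refine ⟨(Real.sqrt (∑ i, x i ^ 2))⁻¹, inv_pos.mpr (Real.sqrt_pos.mpr hsum), ?_⟩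
  simp only [Pi.smul_apply, smul_eq_mul, mul_pow, ← Finset.mul_sum]
  rw [inv_pow, Real.sq_sqrt hsum.le]
  exact inv_mul_cancel₀ hsum.ne'

private lemma exists_unit_kernel {d : ℕ} {A : Matrix (Fin d) (Fin d) ℝ} (hdet : A.det = 0) :
    ∃ v : Fin d → ℝ, (∑ i, v i ^ 2) = 1 ∧ A *ᵥ v = 0 := by
  obtain ⟨x, hx0, hx⟩ := Matrix.exists_mulVec_eq_zero_iff.mpr hdet
  obtain ⟨c, hc, hone⟩ := exists_unit_scale hx0
  exact ⟨c • x, hone, by rw [Matrix.mulVec_smul, hx, smul_zero]⟩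

end Aux

set_option maxHeartbeats 2000000 in
/-- H(A,f) = 0 iff M(A,f) = 0 and A is positive semidefinite. -/
theorem stmt_1 (d : ℕ) (hd : 2 ≤ d) (A : Matrix (Fin d) (Fin d) ℝ) (hA : A.IsSymm)
    (f : ℝ) (hf : 0 ≤ f) :
    bellman d A f = 0 ↔ MAop d A f = 0 ∧ A.PosSemidef := by
  have hd0 : 0 < d := by omega
  have hdR : (0:ℝ) < d := by exact_mod_cast hd0
  have hdRne : (d:ℝ) ≠ 0 := hdR.ne'
  have hdR1 : (1:ℝ) ≤ d := by exact_mod_cast hd0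
  have hherm : A.IsHermitian := by
    rwa [Matrix.IsHermitian, Matrix.conjTranspose_eq_transpose_of_trivial]
  set E := (fun B => bval d A B f) '' S1set d with hE
  have hbell : bellman d A f = sSup E := by rw [bellman, hE]
  have hbdd : BddAbove E := by
    refine ⟨(∑ i, ∑ j, |A j i|) + f * (1/d), ?_⟩
    rintro y ⟨B, ⟨hBpsd, hBtr⟩, rfl⟩
    exact bval_le hd0 hf hBpsd hBtr
  have hne : E.Nonempty := by
    refine ⟨bval d A (Matrix.diagonal fun _ => (d:ℝ)⁻¹) f, Set.mem_image_of_mem _ ?_⟩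
    refine ⟨Matrix.PosSemidef.diagonal
      (fun _ => show (0:ℝ) ≤ (d:ℝ)⁻¹ from inv_nonneg.mpr hdR.le), ?_⟩
    rw [Matrix.trace_diagonal]
    simp only [Finset.sum_const, Finset.card_univ, Fintype.card_fin, nsmul_eq_mul]
    field_simp
  have hpowinv : ∀ x : ℝ, 0 ≤ x → (x ^ d) ^ ((1:ℝ)/d) = x := by
    intro x hx
    rw [← Real.rpow_natCast x d, ← Real.rpow_mul hx, mul_one_div, div_self hdRne, Real.rpow_one]
  have hpowinv' : ∀ x : ℝ, 0 ≤ x → (x ^ ((1:ℝ)/d)) ^ d = x := by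
    intro x hx
    rw [← Real.rpow_natCast (x ^ ((1:ℝ)/d)) d, ← Real.rpow_mul hx, one_div,
      inv_mul_cancel₀ hdRne, Real.rpow_one]
  constructor
  · intro hsup
    rw [hbell] at hsup
    have hub : ∀ B ∈ S1set d, bval d A B f ≤ 0 := by
      intro B hB
      have h := le_csSup hbdd (Set.mem_image_of_mem (fun B => bval d A B f) hB)
      rw [hsup] at h
      exact h
    have hApsd : A.PosSemidef := by
      by_contra hneg
      have hex : ∃ x : Fin d → ℝ, x ⬝ᵥ A *ᵥ x < 0 := by
        by_contra hall
        push_neg at hall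
        exact hneg (Matrix.PosSemidef.of_dotProduct_mulVec_nonneg hherm fun x => by simpa using hall x)
      obtain ⟨x, hx⟩ := hex
      have hx0 : x ≠ 0 := by rintro rfl; simp at hx
      obtain ⟨c, hcpos, hv1⟩ := exists_unit_scale hx0
      set v := c • x with hv
      have hquad : v ⬝ᵥ A *ᵥ v = c^2 * (x ⬝ᵥ A *ᵥ x) := by
        rw [hv, Matrix.mulVec_smul, dotProduct_smul, smul_dotProduct]
        simp only [smul_eq_mul]; ring
      have hquadneg : v ⬝ᵥ A *ᵥ v < 0 := by
        rw [hquad]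
        exact mul_neg_of_pos_of_neg (by positivity) hx
      have hmem : Matrix.vecMulVec v v ∈ S1set d :=
        ⟨vecMulVec_posSemidef v, by rw [_root_.trace_vecMulVec]; exact hv1⟩
      have hb := hub _ hmem
      rw [bval, trace_vecMulVec_mul, det_vecMulVec_self hd,
        Real.zero_rpow (one_div_ne_zero hdRne)] at hb
      linarith
    refine ⟨?_, hApsd⟩
    rcases (psd_det_nonneg hApsd).lt_or_eq with hdetpos | hdet0
    · -- positive determinant case
      have hpd : A.PosDef := pd_of_psd_det_ne hApsd hdetpos.ne'
      set q := A.det ^ ((1:ℝ)/d) with hq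
      have hqpos : 0 < q := Real.rpow_pos_of_pos hdetpos _
      have hfle : f ≤ d * q := by
        have hmem := mem_S1_inv_smul hd0 hpd
        have hb := hub _ hmem
        set c := (A⁻¹.trace)⁻¹ with hc
        have hcpos : 0 < c := inv_pos.mpr (pd_trace_pos hd0 hpd.inv)
        have htr1 : ((c • A⁻¹) * A).trace = c * d := by
          rw [Matrix.smul_mul, Matrix.nonsing_inv_mul A hpd.det_pos.ne'.isUnit,
            Matrix.trace_smul, Matrix.trace_one]
          simp [smul_eq_mul]
        have hdet1 : (c • A⁻¹).det ^ ((1:ℝ)/d) = c * q⁻¹ := by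
          have hmul : ((c ^ d) * A.det⁻¹) ^ ((1:ℝ)/d)
              = (c^d) ^ ((1:ℝ)/d) * (A.det⁻¹) ^ ((1:ℝ)/d) :=
            Real.mul_rpow (pow_nonneg hcpos.le _) (inv_nonneg.mpr hdetpos.le)
          rw [Matrix.det_smul, Matrix.det_nonsing_inv, Ring.inverse_eq_inv, Fintype.card_fin, hmul,
            hpowinv c hcpos.le, Real.inv_rpow hdetpos.le]
        rw [bval, htr1, hdet1] at hb
        have h1 : f * q⁻¹ ≤ (d:ℝ) := by
          have hfc : f * (c * q⁻¹) ≤ c * d := by linarith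
          calc f * q⁻¹ = c⁻¹ * (f * (c * q⁻¹)) := by field_simp
            _ ≤ c⁻¹ * (c * d) := by
                exact mul_le_mul_of_nonneg_left hfc (inv_nonneg.mpr hcpos.le)
            _ = d := by field_simp
        calc f = (f * q⁻¹) * q := by field_simp
          _ ≤ (d:ℝ) * q := mul_le_mul_of_nonneg_right h1 hqpos.le
      have hgle : (d:ℝ) * q ≤ f := by
        by_contra hlt
        push_neg at hlt
        obtain ⟨m, hm, hlow⟩ := exists_lower hd0 hpd
        set θ := f / ((d:ℝ) * q) with hθ
        have hdq : 0 < (d:ℝ) * q := by positivity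
        have hθ1 : θ < 1 := (div_lt_one hdq).mpr hlt
        have hθ0 : 0 ≤ θ := by positivity
        have hθg : θ * ((d:ℝ) * q) = f := div_mul_cancel₀ f hdq.ne'
        have hcsup : sSup E ≤ -((1-θ)*m) := by
          apply csSup_le hne
          rintro y ⟨B, ⟨hBpsd, hBtr⟩, rfl⟩
          have ht0 : 0 ≤ B.det ^ ((1:ℝ)/d) := Real.rpow_nonneg (psd_det_nonneg hBpsd) _
          have h1 : (d:ℝ) * q * (B.det ^ ((1:ℝ)/d)) ≤ (B*A).trace := by
            have h := amgm_two hd0 hApsd hBpsd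
            rw [Real.mul_rpow hdetpos.le (psd_det_nonneg hBpsd), ← hq] at h
            linarith [h]
          have h2 := hlow B hBpsd hBtr
          have h3 := mul_le_mul_of_nonneg_left h1 hθ0
          have h4 := mul_le_mul_of_nonneg_left h2 (by linarith : (0:ℝ) ≤ 1-θ)
          have h5 : f * (B.det ^ ((1:ℝ)/d)) = θ * ((d:ℝ) * q * (B.det ^ ((1:ℝ)/d))) := by
            rw [← mul_assoc, hθg]
          show bval d A B f ≤ -((1-θ)*m)
          rw [bval]
          nlinarith [h3, h4, h5]
        rw [hsup] at hcsup
        nlinarith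
      have hfq : f = (d:ℝ) * q := le_antisymm hfle hgle
      have hqd : q ^ d = A.det := hpowinv' A.det hdetpos.le
      rw [MAop]
      rw [show f / (d:ℝ) = q from by rw [hfq]; field_simp]
      rw [hqd, sub_self]
    · -- zero determinant case
      have hA0 : A.det = 0 := hdet0.symm
      have htrA : 0 ≤ A.trace := Finset.sum_nonneg fun i _ => psd_diag_nonneg hApsd i
      have hf0 : f = 0 := by
        by_contra hfne
        have hfpos : 0 < f := lt_of_le_of_ne hf (Ne.symm hfne)
        obtain ⟨v, hv1, hvker⟩ := exists_unit_kernel hA0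
        set s : ℝ := min ((d:ℝ)⁻¹) ((f / (2 * d * (A.trace + 1))) ^ d) with hs
        have hspos : 0 < s := lt_min (by positivity) (by positivity)
        have hs1 : s ≤ (d:ℝ)⁻¹ := min_le_left _ _
        have hs2 : s ≤ (f / (2 * d * (A.trace + 1))) ^ d := min_le_right _ _
        have hsd : (d:ℝ) * s ≤ 1 := by
          calc (d:ℝ) * s ≤ (d:ℝ) * (d:ℝ)⁻¹ := mul_le_mul_of_nonneg_left hs1 hdR.le
            _ = 1 := mul_inv_cancel₀ hdRne
        set w : Fin d → ℝ := Real.sqrt (1 - d*s) • v with hw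
        have h1ds : 0 ≤ 1 - (d:ℝ)*s := by linarith
        have hw2 : ∑ i, w i ^ 2 = 1 - (d:ℝ)*s := by
          simp only [hw, Pi.smul_apply, smul_eq_mul, mul_pow, ← Finset.mul_sum,
            Real.sq_sqrt h1ds, hv1, mul_one]
        set B : Matrix (Fin d) (Fin d) ℝ := s • (1 : Matrix (Fin d) (Fin d) ℝ)
            + Matrix.vecMulVec w w with hB
        have hBpsd : B.PosSemidef := by
          have h1 : ((1 : Matrix (Fin d) (Fin d) ℝ)).PosSemidef := Matrix.PosSemidef.one
          exact (psd_smul h1 hspos.le).add (vecMulVec_posSemidef w)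
        have hBtr : B.trace = 1 := by
          rw [hB, Matrix.trace_add, Matrix.trace_smul, Matrix.trace_one, _root_.trace_vecMulVec, hw2]
          simp only [smul_eq_mul, Fintype.card_fin]
          ring
        have hmem : B ∈ S1set d := ⟨hBpsd, hBtr⟩
        have hBAtr : (B * A).trace = s * A.trace := by
          rw [hB, Matrix.add_mul, Matrix.smul_mul, Matrix.one_mul, Matrix.trace_add,
            Matrix.trace_smul, trace_vecMulVec_mul]
          have : A *ᵥ w = 0 := by rw [hw, Matrix.mulVec_smul, hvker, smul_zero]
          rw [this]
          simp [smul_eq_mul]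
        have hwd : w ⬝ᵥ w = 1 - (d:ℝ)*s := by
          rw [show w ⬝ᵥ w = ∑ i, w i ^ 2 from by simp [dotProduct, sq], hw2]
        have hBdet : B.det = s^d * (1 + s⁻¹ * (1 - (d:ℝ)*s)) := by
          have hfac : B = s • ((1 : Matrix (Fin d) (Fin d) ℝ)
              + Matrix.vecMulVec (s⁻¹ • w) w) := by
            rw [hB, smul_add]
            congr 1
            ext i j
            simp only [Matrix.smul_apply, Matrix.vecMulVec_apply, Pi.smul_apply, smul_eq_mul]
            field_simp
          rw [hfac, Matrix.det_smul, Fintype.card_fin,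
            Matrix.vecMulVec_eq Unit, Matrix.det_one_add_replicateCol_mul_replicateRow]
          congr 1
          rw [dotProduct_smul, hwd]
          simp [smul_eq_mul]
        set t : ℝ := s ^ ((1:ℝ)/d) with hts
        have htpos : 0 < t := Real.rpow_pos_of_pos hspos _
        have htd : 0 < t * (d:ℝ) := by positivity
        have hBdetlb : (s/(t*(d:ℝ)))^d ≤ B.det := by
          rw [div_pow, mul_pow, hpowinv' s hspos.le, hBdet]
          have hform : 1 + s⁻¹ * (1 - (d:ℝ)*s) = s⁻¹ * (1 - ((d:ℝ)-1)*s) := by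
            field_simp; ring
          have hineq : (d:ℝ)⁻¹ ≤ 1 - ((d:ℝ)-1)*s := by
            have hh : ((d:ℝ)-1)*s ≤ ((d:ℝ)-1)*(d:ℝ)⁻¹ :=
              mul_le_mul_of_nonneg_left hs1 (by linarith)
            have hdd : (d:ℝ) * (d:ℝ)⁻¹ = 1 := mul_inv_cancel₀ hdRne
            nlinarith
          have hdpow : (d:ℝ) ≤ (d:ℝ)^d := by
            calc (d:ℝ) = (d:ℝ)^1 := (pow_one _).symm
              _ ≤ (d:ℝ)^d := pow_le_pow_right₀ hdR1 hd0
          have hchain : s^d / (s * (d:ℝ)^d) ≤ s^d * (s⁻¹ * (1 - ((d:ℝ)-1)*s)) := by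
            rw [div_eq_mul_inv, mul_inv]
            refine mul_le_mul_of_nonneg_left ?_ (by positivity)
            refine mul_le_mul_of_nonneg_left ?_ (by positivity)
            calc ((d:ℝ)^d)⁻¹ ≤ (d:ℝ)⁻¹ := by
                  apply inv_anti₀ hdR hdpow
              _ ≤ 1 - ((d:ℝ)-1)*s := hineq
          rw [hform]
          exact hchain
        have hudlb : s/(t*(d:ℝ)) ≤ B.det ^ ((1:ℝ)/d) := by
          have h := Real.rpow_le_rpow (by positivity) hBdetlb
            (by positivity : (0:ℝ) ≤ 1/(d:ℝ))
          rwa [hpowinv _ (by positivity)] at h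
        have hT1 : (0:ℝ) < A.trace + 1 := by linarith
        have hden : (0:ℝ) < 2 * (d:ℝ) * (A.trace + 1) :=
          mul_pos (by positivity) hT1
        have htub : t * (d:ℝ) ≤ f / (2 * (A.trace + 1)) := by
          have h1 : t ≤ f / (2 * d * (A.trace + 1)) := by
            have h := Real.rpow_le_rpow hspos.le hs2
              (by positivity : (0:ℝ) ≤ 1/(d:ℝ))
            rwa [hpowinv _ (div_nonneg hf hden.le)] at h
          calc t * (d:ℝ) ≤ (f / (2 * d * (A.trace + 1))) * d :=
                mul_le_mul_of_nonneg_right h1 hdR.le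
            _ = f / (2 * (A.trace + 1)) := by
                field_simp
        have hkey : A.trace * (t * (d:ℝ)) < f := by
          have hstep1 : A.trace * (t*(d:ℝ)) ≤ A.trace * (f / (2*(A.trace+1))) :=
            mul_le_mul_of_nonneg_left htub htrA
          have hstep2 : A.trace * (f / (2*(A.trace+1))) ≤ f/2 := by
            rw [mul_div_assoc'] at *
            rw [div_le_div_iff₀ (by linarith) (by norm_num : (0:ℝ) < 2)]
            nlinarith [mul_nonneg htrA hf]
          linarith
        have hb := hub _ hmem
        rw [bval, hBAtr] at hb
        have h6 : f * (s/(t*(d:ℝ))) ≤ f * (B.det ^ ((1:ℝ)/d)) :=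
          mul_le_mul_of_nonneg_left hudlb hf
        have h7 : s * A.trace < f * (s/(t*(d:ℝ))) := by
          have he : f * (s/(t*(d:ℝ))) = s * (f/(t*(d:ℝ))) := by ring
          rw [he]
          refine mul_lt_mul_of_pos_left ?_ hspos
          rw [lt_div_iff₀ htd]
          exact hkey
        linarith
      rw [MAop, hA0, hf0]
      simp [zero_pow hd0.ne']
  · rintro ⟨hM, hApsd⟩
    have hdet : A.det = (f/d)^d := by
      rw [MAop] at hM; linarith
    have hq : A.det ^ ((1:ℝ)/d) = f / d := by
      rw [hdet, hpowinv _ (by positivity)]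
    have hub : ∀ y ∈ E, y ≤ 0 := by
      rintro y ⟨B, ⟨hBpsd, hBtr⟩, rfl⟩
      have h := amgm_two hd0 hApsd hBpsd
      rw [Real.mul_rpow (psd_det_nonneg hApsd) (psd_det_nonneg hBpsd), hq] at h
      have he : (d:ℝ) * (f/d * B.det ^ ((1:ℝ)/d)) = f * B.det ^ ((1:ℝ)/d) := by
        field_simp
      rw [he] at h
      show bval d A B f ≤ 0
      rw [bval]
      linarith
    have hwit : ∃ B ∈ S1set d, bval d A B f = 0 := by
      rcases (psd_det_nonneg hApsd).lt_or_eq with hdetpos | hdet0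
      · have hpd := pd_of_psd_det_ne hApsd hdetpos.ne'
        set c := (A⁻¹.trace)⁻¹ with hc
        have hcpos : 0 < c := inv_pos.mpr (pd_trace_pos hd0 hpd.inv)
        refine ⟨c • A⁻¹, mem_S1_inv_smul hd0 hpd, ?_⟩
        have hfpos : 0 < f := by
          rcases hf.lt_or_eq with h | h
          · exact h
          · exfalso
            rw [← h] at hdet
            simp [zero_pow hd0.ne'] at hdet
            rw [hdet] at hdetpos
            exact lt_irrefl _ hdetpos
        have htr1 : ((c • A⁻¹) * A).trace = c * d := by
          rw [Matrix.smul_mul, Matrix.nonsing_inv_mul A hpd.det_pos.ne'.isUnit,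
            Matrix.trace_smul, Matrix.trace_one]
          simp [smul_eq_mul]
        have hdet1 : (c • A⁻¹).det ^ ((1:ℝ)/d) = c * (f/d)⁻¹ := by
          have hmul : ((c ^ d) * A.det⁻¹) ^ ((1:ℝ)/d)
              = (c^d) ^ ((1:ℝ)/d) * (A.det⁻¹) ^ ((1:ℝ)/d) :=
            Real.mul_rpow (pow_nonneg hcpos.le _) (inv_nonneg.mpr hdetpos.le)
          rw [Matrix.det_smul, Matrix.det_nonsing_inv, Ring.inverse_eq_inv, Fintype.card_fin, hmul,
            hpowinv c hcpos.le, Real.inv_rpow (psd_det_nonneg hApsd), hq]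
        rw [bval, htr1, hdet1]
        field_simp
        ring
      · have hA0 : A.det = 0 := hdet0.symm
        have hf0 : f = 0 := by
          rw [hA0] at hdet
          have h1 : f / (d:ℝ) = 0 := by
            have := pow_eq_zero_iff (n := d) hd0.ne' |>.mp hdet.symm
            exact this
          field_simp at h1
          simpa using h1
        obtain ⟨v, hv1, hvker⟩ := exists_unit_kernel hA0
        refine ⟨Matrix.vecMulVec v v,
          ⟨vecMulVec_posSemidef v, by rw [_root_.trace_vecMulVec]; exact hv1⟩, ?_⟩
        rw [bval, trace_vecMulVec_mul, hvker, hf0]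
        simp
    obtain ⟨B, hBmem, hB0⟩ := hwit
    rw [hbell]
    refine le_antisymm (csSup_le hne hub) ?_
    have h0 : (0:ℝ) ∈ E := ⟨B, hBmem, hB0⟩
    exact le_csSup hbdd h0
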